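/- A *-external sequent A₁, …, A_n → B is derivable in L*ω if and only if for all instance lists Π₁ ∈ Inst(A₁), …, Π_n ∈ Inst(A_n), the product-free sequent Π₁, …, Π_n → B is derivable in L^Λ(\,/). -/
import Mathlib


/-- Formulas of the Lambek calculus with iteration L*ω: variables `p n`,
left division `A \ B`, right division `B / A` (written `rdiv B A`),
product `A · B` and Kleene star `A*`. -/
inductive LFormula : Type
  | var : ℕ → LFormula
  | ldiv : LFormula → LFormula → LFormula   -- ldiv A B  is  A \ B
  | rdiv : LFormula → LFormula → LFormula   -- rdiv B A  is  B / A
  | mul : LFormula → LFormula → LFormula    -- A · B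
  | star : LFormula → LFormula              -- A*
  deriving DecidableEq

/-- Derivability in L*ω, as the least set of sequents (`LDer Γ B` means `Γ → B` is
derivable) containing the identity axioms and closed under the rules of the calculus,
including the ω-rule for Kleene star. -/
inductive LDer : List LFormula → LFormula → Prop
  /-- identity axiom A → A -/
  | id (A : LFormula) : LDer [A] A
  /-- (\→): from Π → A and Γ,B,Δ → C infer Γ,Π,A\B,Δ → C -/
  | ldiv_left (P Γ Δ : List LFormula) (A B C : LFormula) :
      LDer P A → LDer (Γ ++ [B] ++ Δ) C →
      LDer (Γ ++ P ++ [LFormula.ldiv A B] ++ Δ) C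
  /-- (→\): from A,Π → B infer Π → A\B -/
  | ldiv_right (P : List LFormula) (A B : LFormula) :
      LDer (A :: P) B → LDer P (LFormula.ldiv A B)
  /-- (/→): from Π → A and Γ,B,Δ → C infer Γ,B/A,Π,Δ → C -/
  | rdiv_left (P Γ Δ : List LFormula) (A B C : LFormula) :
      LDer P A → LDer (Γ ++ [B] ++ Δ) C →
      LDer (Γ ++ [LFormula.rdiv B A] ++ P ++ Δ) C
  /-- (→/): from Π,A → B infer Π → B/A -/
  | rdiv_right (P : List LFormula) (A B : LFormula) :
      LDer (P ++ [A]) B → LDer P (LFormula.rdiv B A)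
  /-- (·→): from Γ,A,B,Δ → C infer Γ,A·B,Δ → C -/
  | mul_left (Γ Δ : List LFormula) (A B C : LFormula) :
      LDer (Γ ++ [A, B] ++ Δ) C → LDer (Γ ++ [LFormula.mul A B] ++ Δ) C
  /-- (→·): from Γ → A and Δ → B infer Γ,Δ → A·B -/
  | mul_right (Γ Δ : List LFormula) (A B : LFormula) :
      LDer Γ A → LDer Δ B → LDer (Γ ++ Δ) (LFormula.mul A B)
  /-- (*→)_ω: from Γ,Aⁿ,Δ → C for every n ≥ 0 infer Γ,A*,Δ → C -/
  | star_left (Γ Δ : List LFormula) (A C : LFormula) :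
      (∀ n : ℕ, LDer (Γ ++ List.replicate n A ++ Δ) C) →
      LDer (Γ ++ [LFormula.star A] ++ Δ) C
  /-- (→*)_n: from Π₁ → A, …, Π_n → A infer Π₁,…,Π_n → A* -/
  | star_right (Ps : List (List LFormula)) (A : LFormula) :
      (∀ P ∈ Ps, LDer P A) → LDer Ps.flatten (LFormula.star A)


/-- A formula is product-free if it is built from variables using only \\ and /. -/
def ProdFree : LFormula → Prop
  | LFormula.var _ => True
  | LFormula.ldiv A B => ProdFree A ∧ ProdFree B
  | LFormula.rdiv B A => ProdFree B ∧ ProdFree A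
  | LFormula.mul _ _ => False
  | LFormula.star _ => False

/-- A formula is *-external if no · or * occurs in it within the scope of \\ or /. -/
inductive StarExt : LFormula → Prop
  | pf {A : LFormula} : ProdFree A → StarExt A
  | mul {A B : LFormula} : StarExt A → StarExt B → StarExt (LFormula.mul A B)
  | star {A : LFormula} : StarExt A → StarExt (LFormula.star A)

/-- The instances of a *-external formula: `Inst A Γ` says that the list Γ of
product-free formulas is an instance of A (Inst(A) = {A} for product-free A;
instances of A·B are concatenations of instances of A and of B; instances of A*
are concatenations of finitely many instances of A). -/
inductive Inst : LFormula → List LFormula → Prop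
  | pf {A : LFormula} : ProdFree A → Inst A [A]
  | mul {A B : LFormula} {Γ Δ : List LFormula} :
      Inst A Γ → Inst B Δ → Inst (LFormula.mul A B) (Γ ++ Δ)
  | star_nil {A : LFormula} : Inst (LFormula.star A) []
  | star_cons {A : LFormula} {Γ Δ : List LFormula} :
      Inst A Γ → Inst (LFormula.star A) Δ → Inst (LFormula.star A) (Γ ++ Δ)

/-- Derivability in the product-free Lambek calculus L^Λ(\\,/) allowing empty
antecedents: the least set of sequents of product-free formulas containing the
identity axioms and closed under the four division rules. -/
inductive PDer : List LFormula → LFormula → Prop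
  | id (A : LFormula) : ProdFree A → PDer [A] A
  | ldiv_left (P Γ Δ : List LFormula) (A B C : LFormula) :
      PDer P A → PDer (Γ ++ [B] ++ Δ) C →
      PDer (Γ ++ P ++ [LFormula.ldiv A B] ++ Δ) C
  | ldiv_right (P : List LFormula) (A B : LFormula) :
      PDer (A :: P) B → PDer P (LFormula.ldiv A B)
  | rdiv_left (P Γ Δ : List LFormula) (A B C : LFormula) :
      PDer P A → PDer (Γ ++ [B] ++ Δ) C →
      PDer (Γ ++ [LFormula.rdiv B A] ++ P ++ Δ) C
  | rdiv_right (P : List LFormula) (A B : LFormula) :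
      PDer (P ++ [A]) B → PDer P (LFormula.rdiv B A)


namespace StarExtProof

open LFormula

lemma starExt_ldiv {A B : LFormula} (h : StarExt (ldiv A B)) : ProdFree A ∧ ProdFree B := by
  cases h with
  | pf h => exact h

lemma starExt_rdiv {A B : LFormula} (h : StarExt (rdiv B A)) : ProdFree B ∧ ProdFree A := by
  cases h with
  | pf h => exact h

lemma starExt_mul {A B : LFormula} (h : StarExt (mul A B)) : StarExt A ∧ StarExt B := by
  cases h with
  | pf h => exact h.elim
  | mul hA hB => exact ⟨hA, hB⟩

lemma starExt_star {A : LFormula} (h : StarExt (star A)) : StarExt A := by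
  cases h with
  | pf h => exact h.elim
  | star hA => exact hA

lemma inst_of_prodFree {A : LFormula} {P : List LFormula} (hA : ProdFree A)
    (h : Inst A P) : P = [A] := by
  cases h with
  | pf _ => rfl
  | mul _ _ => exact hA.elim
  | star_nil => exact hA.elim
  | star_cons _ _ => exact hA.elim

lemma inst_mul {A B : LFormula} {P : List LFormula} (h : Inst (mul A B) P) :
    ∃ Pa Pb, P = Pa ++ Pb ∧ Inst A Pa ∧ Inst B Pb := by
  cases h with
  | pf hp => exact hp.elim
  | mul hA hB => exact ⟨_, _, rfl, hA, hB⟩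

lemma inst_star' : ∀ {X : LFormula} {P : List LFormula}, Inst X P →
    ∀ {A : LFormula}, X = star A →
    ∃ qs : List (List LFormula), P = qs.flatten ∧ ∀ q ∈ qs, Inst A q := by
  intro X P h
  induction h with
  | pf hp => intro A hX; subst hX; exact hp.elim
  | mul _ _ _ _ => intro A hX; simp at hX
  | star_nil => intro A hX; exact ⟨[], rfl, by simp⟩
  | @star_cons A0 Γ Δ hΓ hΔ _ ihΔ =>
      intro A hX
      injection hX with hA
      subst hA
      obtain ⟨qs, rfl, hqs⟩ := ihΔ rfl
      refine ⟨Γ :: qs, rfl, ?_⟩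
      intro q hq
      rcases List.mem_cons.mp hq with rfl | hq
      · exact hΓ
      · exact hqs _ hq

lemma inst_star {A : LFormula} {P : List LFormula} (h : Inst (star A) P) :
    ∃ qs : List (List LFormula), P = qs.flatten ∧ ∀ q ∈ qs, Inst A q :=
  inst_star' h rfl

lemma forall₂_append {R : LFormula → List LFormula → Prop} :
    ∀ {l₁ l₂ : List LFormula} {m₁ m₂ : List (List LFormula)},
    List.Forall₂ R l₁ m₁ → List.Forall₂ R l₂ m₂ →
    List.Forall₂ R (l₁ ++ l₂) (m₁ ++ m₂) := by
  intro l₁ l₂ m₁ m₂ h₁ h₂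
  induction h₁ with
  | nil => exact h₂
  | cons hab _ ih => exact List.Forall₂.cons hab ih

lemma forall₂_split {R : LFormula → List LFormula → Prop} :
    ∀ {l₁ l₂ : List LFormula} {m : List (List LFormula)},
    List.Forall₂ R (l₁ ++ l₂) m →
    ∃ m₁ m₂, m = m₁ ++ m₂ ∧ List.Forall₂ R l₁ m₁ ∧ List.Forall₂ R l₂ m₂ := by
  intro l₁
  induction l₁ with
  | nil => intro l₂ m h; exact ⟨[], m, rfl, List.Forall₂.nil, h⟩
  | cons a l ih =>
      intro l₂ m h
      cases h with
      | cons hab h' =>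
          obtain ⟨m₁, m₂, rfl, h₁, h₂⟩ := ih h'
          exact ⟨_ :: m₁, m₂, rfl, List.Forall₂.cons hab h₁, h₂⟩

lemma forall₂_singleton {R : LFormula → List LFormula → Prop} {a : LFormula}
    {m : List (List LFormula)} (h : List.Forall₂ R [a] m) :
    ∃ b, m = [b] ∧ R a b := by
  cases h with
  | cons hab h' => cases h'; exact ⟨_, rfl, hab⟩

lemma forall₂_replicate_inst {A : LFormula} :
    ∀ {qs : List (List LFormula)}, (∀ q ∈ qs, Inst A q) →
    List.Forall₂ Inst (List.replicate qs.length A) qs := by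
  intro qs
  induction qs with
  | nil => intro _; exact List.Forall₂.nil
  | cons q qs ih =>
      intro h
      rw [List.length_cons, List.replicate_succ]
      exact List.Forall₂.cons (h q (by simp)) (ih fun q hq => h q (by simp [hq]))

lemma fwd : ∀ {Γ : List LFormula} {B : LFormula}, LDer Γ B →
    (∀ A ∈ Γ, StarExt A) → ProdFree B →
    ∀ Ps : List (List LFormula), List.Forall₂ Inst Γ Ps → PDer Ps.flatten B := by
  intro Γ B h
  induction h with
  | id A =>
      intro hΓ hB Ps hPs
      obtain ⟨b, rfl, hb⟩ := forall₂_singleton hPs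
      rw [inst_of_prodFree hB hb]
      simpa using PDer.id A hB
  | ldiv_left P Γ Δ A B C hP hGBD ihP ihGBD =>
      intro hΓ hB Ps hPs
      have hΓ' : ∀ x ∈ Γ, StarExt x := fun x hx => hΓ x (by simp [hx])
      have hΔ' : ∀ x ∈ Δ, StarExt x := fun x hx => hΓ x (by simp [hx])
      have hP' : ∀ x ∈ P, StarExt x := fun x hx => hΓ x (by simp [hx])
      obtain ⟨hA, hB'⟩ := starExt_ldiv (hΓ (ldiv A B) (by simp))
      simp only [List.append_assoc] at hPs
      obtain ⟨m₁, m', rfl, h₁, h'⟩ := forall₂_split hPs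
      obtain ⟨m₂, m'', rfl, h₂, h''⟩ := forall₂_split h'
      obtain ⟨m₃, m₄, rfl, h₃, h₄⟩ := forall₂_split h''
      obtain ⟨b, rfl, hb⟩ := forall₂_singleton h₃
      rw [inst_of_prodFree (show ProdFree (ldiv A B) from ⟨hA, hB'⟩) hb]
      have hmem : ∀ x ∈ Γ ++ [B] ++ Δ, StarExt x := by
        intro x hx
        rcases List.mem_append.mp hx with hx | hx
        · rcases List.mem_append.mp hx with hx | hx
          · exact hΓ' x hx
          · rw [List.mem_singleton.mp hx]; exact StarExt.pf hB'
        · exact hΔ' x hx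
      have h2 : PDer (m₁.flatten ++ [B] ++ m₄.flatten) C := by
        simpa using ihGBD hmem hB (m₁ ++ [[B]] ++ m₄)
          (forall₂_append (forall₂_append h₁
            (List.Forall₂.cons (Inst.pf hB') List.Forall₂.nil)) h₄)
      have hder := PDer.ldiv_left m₂.flatten m₁.flatten m₄.flatten A B C
        (ihP hP' hA m₂ h₂) h2
      simpa using hder
  | ldiv_right P A B hAP ih =>
      intro hΓ hB Ps hPs
      apply PDer.ldiv_right
      have hmem : ∀ x ∈ A :: P, StarExt x := by
        intro x hx
        rcases List.mem_cons.mp hx with rfl | hx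
        · exact StarExt.pf hB.1
        · exact hΓ x hx
      have := ih hmem hB.2 ([A] :: Ps) (List.Forall₂.cons (Inst.pf hB.1) hPs)
      simpa using this
  | rdiv_left P Γ Δ A B C hP hGBD ihP ihGBD =>
      intro hΓ hB Ps hPs
      have hΓ' : ∀ x ∈ Γ, StarExt x := fun x hx => hΓ x (by simp [hx])
      have hΔ' : ∀ x ∈ Δ, StarExt x := fun x hx => hΓ x (by simp [hx])
      have hP' : ∀ x ∈ P, StarExt x := fun x hx => hΓ x (by simp [hx])
      obtain ⟨hB', hA⟩ := starExt_rdiv (hΓ (rdiv B A) (by simp))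
      simp only [List.append_assoc] at hPs
      obtain ⟨m₁, m', rfl, h₁, h'⟩ := forall₂_split hPs
      obtain ⟨m₂, m'', rfl, h₂, h''⟩ := forall₂_split h'
      obtain ⟨m₃, m₄, rfl, h₃, h₄⟩ := forall₂_split h''
      obtain ⟨b, rfl, hb⟩ := forall₂_singleton h₂
      rw [inst_of_prodFree (show ProdFree (rdiv B A) from ⟨hB', hA⟩) hb]
      have hmem : ∀ x ∈ Γ ++ [B] ++ Δ, StarExt x := by
        intro x hx
        rcases List.mem_append.mp hx with hx | hx
        · rcases List.mem_append.mp hx with hx | hx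
          · exact hΓ' x hx
          · rw [List.mem_singleton.mp hx]; exact StarExt.pf hB'
        · exact hΔ' x hx
      have h2 : PDer (m₁.flatten ++ [B] ++ m₄.flatten) C := by
        simpa using ihGBD hmem hB (m₁ ++ [[B]] ++ m₄)
          (forall₂_append (forall₂_append h₁
            (List.Forall₂.cons (Inst.pf hB') List.Forall₂.nil)) h₄)
      have hder := PDer.rdiv_left m₃.flatten m₁.flatten m₄.flatten A B C
        (ihP hP' hA m₃ h₃) h2
      simpa using hder
  | rdiv_right P A B hPA ih =>
      intro hΓ hB Ps hPs
      apply PDer.rdiv_right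
      have hmem : ∀ x ∈ P ++ [A], StarExt x := by
        intro x hx
        rcases List.mem_append.mp hx with hx | hx
        · exact hΓ x hx
        · rw [List.mem_singleton.mp hx]; exact StarExt.pf hB.2
      have := ih hmem hB.1 (Ps ++ [[A]])
        (forall₂_append hPs (List.Forall₂.cons (Inst.pf hB.2) List.Forall₂.nil))
      simpa using this
  | mul_left Γ Δ A B C hprem ih =>
      intro hΓ hB Ps hPs
      have hΓ' : ∀ x ∈ Γ, StarExt x := fun x hx => hΓ x (by simp [hx])
      have hΔ' : ∀ x ∈ Δ, StarExt x := fun x hx => hΓ x (by simp [hx])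
      obtain ⟨hA, hB'⟩ := starExt_mul (hΓ (mul A B) (by simp))
      simp only [List.append_assoc] at hPs
      obtain ⟨m₁, m', rfl, h₁, h'⟩ := forall₂_split hPs
      obtain ⟨m₂, m₃, rfl, h₂, h₃⟩ := forall₂_split h'
      obtain ⟨b, rfl, hb⟩ := forall₂_singleton h₂
      obtain ⟨Pa, Pb, rfl, hPa, hPb⟩ := inst_mul hb
      have hmem : ∀ x ∈ Γ ++ [A, B] ++ Δ, StarExt x := by
        intro x hx
        rcases List.mem_append.mp hx with hx | hx
        · rcases List.mem_append.mp hx with hx | hx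
          · exact hΓ' x hx
          · rcases List.mem_cons.mp hx with rfl | hx
            · exact hA
            · rw [List.mem_singleton.mp hx]; exact hB'
        · exact hΔ' x hx
      have := ih hmem hB (m₁ ++ [Pa, Pb] ++ m₃)
        (forall₂_append (forall₂_append h₁
          (List.Forall₂.cons hPa (List.Forall₂.cons hPb List.Forall₂.nil))) h₃)
      simpa using this
  | mul_right Γ Δ A B _ _ _ _ =>
      intro _ hB
      exact hB.elim
  | star_left Γ Δ A C hprem ih =>
      intro hΓ hB Ps hPs
      have hΓ' : ∀ x ∈ Γ, StarExt x := fun x hx => hΓ x (by simp [hx])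
      have hΔ' : ∀ x ∈ Δ, StarExt x := fun x hx => hΓ x (by simp [hx])
      have hA : StarExt A := starExt_star (hΓ (star A) (by simp))
      simp only [List.append_assoc] at hPs
      obtain ⟨m₁, m', rfl, h₁, h'⟩ := forall₂_split hPs
      obtain ⟨m₂, m₃, rfl, h₂, h₃⟩ := forall₂_split h'
      obtain ⟨b, rfl, hb⟩ := forall₂_singleton h₂
      obtain ⟨qs, rfl, hqs⟩ := inst_star hb
      have hmem : ∀ x ∈ Γ ++ List.replicate qs.length A ++ Δ, StarExt x := by
        intro x hx
        rcases List.mem_append.mp hx with hx | hx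
        · rcases List.mem_append.mp hx with hx | hx
          · exact hΓ' x hx
          · rw [List.eq_of_mem_replicate hx]; exact hA
        · exact hΔ' x hx
      have := ih qs.length hmem hB (m₁ ++ qs ++ m₃)
        (forall₂_append (forall₂_append h₁ (forall₂_replicate_inst hqs)) h₃)
      simpa using this
  | star_right Ps A _ _ =>
      intro _ hB
      exact hB.elim

lemma pder_lder : ∀ {Γ : List LFormula} {B : LFormula}, PDer Γ B → LDer Γ B := by
  intro Γ B h
  induction h with
  | id A _ => exact LDer.id A
  | ldiv_left P Γ Δ A B C _ _ ih1 ih2 => exact LDer.ldiv_left P Γ Δ A B C ih1 ih2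
  | ldiv_right P A B _ ih => exact LDer.ldiv_right P A B ih
  | rdiv_left P Γ Δ A B C _ _ ih1 ih2 => exact LDer.rdiv_left P Γ Δ A B C ih1 ih2
  | rdiv_right P A B _ ih => exact LDer.rdiv_right P A B ih

lemma lder_of_inst {A : LFormula} (hA : StarExt A) :
    ∀ (Δ Θ : List LFormula) (C : LFormula),
    (∀ P, Inst A P → LDer (Δ ++ P ++ Θ) C) → LDer (Δ ++ [A] ++ Θ) C := by
  induction hA with
  | pf h => intro Δ Θ C hyp; exact hyp [_] (Inst.pf h)
  | @mul A B _ _ ihA ihB =>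
      intro Δ Θ C hyp
      have key : LDer (Δ ++ [A, B] ++ Θ) C := by
        have e : Δ ++ [A, B] ++ Θ = Δ ++ [A] ++ (B :: Θ) := by simp
        rw [e]
        apply ihA
        intro Pa hPa
        have e2 : Δ ++ Pa ++ (B :: Θ) = (Δ ++ Pa) ++ [B] ++ Θ := by simp
        rw [e2]
        apply ihB
        intro Pb hPb
        have h := hyp (Pa ++ Pb) (Inst.mul hPa hPb)
        simpa using h
      exact LDer.mul_left Δ Θ A B C key
  | @star A _ ihA =>
      intro Δ Θ C hyp
      apply LDer.star_left
      intro n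
      induction n generalizing Δ with
      | zero => simpa using hyp [] Inst.star_nil
      | succ n ihn =>
          rw [List.replicate_succ]
          have e : Δ ++ (A :: List.replicate n A) ++ Θ
              = Δ ++ [A] ++ (List.replicate n A ++ Θ) := by simp
          rw [e]
          apply ihA
          intro Pa hPa
          have e2 : Δ ++ Pa ++ (List.replicate n A ++ Θ)
              = (Δ ++ Pa) ++ List.replicate n A ++ Θ := by simp
          rw [e2]
          apply ihn
          intro P hP
          have h := hyp (Pa ++ P) (Inst.star_cons hPa hP)
          simpa using h

lemma lder_of_insts : ∀ (Γ : List LFormula), (∀ A ∈ Γ, StarExt A) →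
    ∀ (Δ : List LFormula) (C : LFormula),
    (∀ Ps : List (List LFormula), List.Forall₂ Inst Γ Ps → LDer (Δ ++ Ps.flatten) C) →
    LDer (Δ ++ Γ) C := by
  intro Γ
  induction Γ with
  | nil => intro _ Δ C hyp; simpa using hyp [] List.Forall₂.nil
  | cons A Γ ih =>
      intro hΓ Δ C hyp
      have e : Δ ++ (A :: Γ) = Δ ++ [A] ++ Γ := by simp
      rw [e]
      apply lder_of_inst (hΓ A (by simp))
      intro P hP
      have e2 : Δ ++ P ++ Γ = (Δ ++ P) ++ Γ := by simp
      rw [e2]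
      apply ih (fun x hx => hΓ x (by simp [hx]))
      intro Ps hPs
      have h := hyp (P :: Ps) (List.Forall₂.cons hP hPs)
      simpa using h

end StarExtProof

/-- A *-external sequent A₁,…,A_n → B is derivable in L*ω iff all of its instance
sequents Π₁,…,Π_n → B (with Π_i ∈ Inst(A_i)) are derivable in L^Λ(\\,/). -/
theorem star_external_iff_instances (Γ : List LFormula) (B : LFormula)
    (hΓ : ∀ A ∈ Γ, StarExt A) (hB : ProdFree B) :
    LDer Γ B ↔ ∀ Ps : List (List LFormula), List.Forall₂ Inst Γ Ps →
      PDer Ps.flatten B := by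
  constructor
  · intro h Ps hPs
    exact StarExtProof.fwd h hΓ hB Ps hPs
  · intro hyp
    have := StarExtProof.lder_of_insts Γ hΓ [] B
      (fun Ps hPs => by simpa using StarExtProof.pder_lder (hyp Ps hPs))
    simpa using this
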